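/- Let n ≥ 3 and 0 < C₀ < 1. Let 0 < γ₁ ≤ 1/2, 0 ≤ γ₂ ≤ 1, 0 ≤ γ₃ ≤ 1, and define the unit vectors ν₁ = −eₙ, ν₂ = (−eₙ + γ₁ e_{n−1})/√(1+γ₁²), ν₃ = (−eₙ + γ₂ e_{n−1} + γ₃ e_{n−2})/√(1+γ₂²+γ₃²) in ℝⁿ, and the hyperplanes Πₖ = { v ∈ ℝⁿ : v·νₖ = 0 } for k = 1, 2, 3. Assume ν₁·ν₂ ≤ 1−C₀, ν₁·ν₃ ≤ 1−C₀ and ν₂·ν₃ ≤ 1−C₀. Then there exists a constant C > 0, depending only on C₀, such that every real symmetric n×n matrix g satisfies ‖g‖ ≤ C · max_{k=1,2,3} sup{ |⟨g v, w⟩| : v, w ∈ Πₖ, ‖v‖ = ‖w‖ = 1 }, where ‖g‖ is the operator norm of g on ℝⁿ. -/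

import Mathlib

open Matrix
open scoped RealInnerProductSpace

section Aux
variable {n : ℕ}
local notation "Euc" => EuclideanSpace ℝ (Fin n)

private lemma abs_add9 (a₁ a₂ a₃ a₄ a₅ a₆ a₇ a₈ a₉ : ℝ) :
    |a₁ + a₂ + a₃ + a₄ + a₅ + a₆ + a₇ + a₈ + a₉| ≤
      |a₁| + |a₂| + |a₃| + |a₄| + |a₅| + |a₆| + |a₇| + |a₈| + |a₉| := by
  have h1 := abs_add_le (a₁ + a₂ + a₃ + a₄ + a₅ + a₆ + a₇ + a₈) a₉
  have h2 := abs_add_le (a₁ + a₂ + a₃ + a₄ + a₅ + a₆ + a₇) a₈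
  have h3 := abs_add_le (a₁ + a₂ + a₃ + a₄ + a₅ + a₆) a₇
  have h4 := abs_add_le (a₁ + a₂ + a₃ + a₄ + a₅) a₆
  have h5 := abs_add_le (a₁ + a₂ + a₃ + a₄) a₅
  have h6 := abs_add_le (a₁ + a₂ + a₃) a₄
  have h7 := abs_add_le (a₁ + a₂) a₃
  have h8 := abs_add_le a₁ a₂
  linarith

private lemma abs_helper {a b c e : ℝ} (h : |a + b| ≤ c) (hb : |b| ≤ e) : |a| ≤ c + e := by
  have h2 := abs_sub (a + b) b
  rw [add_sub_cancel_right] at h2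
  linarith

private lemma mul_le_mul3 {a b c A B C : ℝ} (ha : 0 ≤ a) (hb : 0 ≤ b) (hc : 0 ≤ c)
    (hA : a ≤ A) (hB : b ≤ B) (hC : c ≤ C) : a * b * c ≤ A * B * C := by
  have h1 : a * b ≤ A * B := mul_le_mul hA hB hb (ha.trans hA)
  exact mul_le_mul h1 hC hc (mul_nonneg (ha.trans hA) (hb.trans hB))

private lemma aux_bdd (A : Euc →L[ℝ] Euc) (ν : Euc) :
    BddAbove {t : ℝ | ∃ v w : Euc,
      ⟪v, ν⟫ = 0 ∧ ⟪w, ν⟫ = 0 ∧ ‖v‖ = 1 ∧ ‖w‖ = 1 ∧ t = |⟪A v, w⟫|} := by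
  refine ⟨‖A‖, ?_⟩
  rintro τ ⟨v, w, -, -, hv1, hw1, rfl⟩
  calc |⟪A v, w⟫| ≤ ‖A v‖ * ‖w‖ := abs_real_inner_le_norm _ _
    _ ≤ (‖A‖ * ‖v‖) * ‖w‖ := by gcongr; exact A.le_opNorm v
    _ = ‖A‖ := by rw [hv1, hw1]; ring

private lemma aux_sSup_nonneg (A : Euc →L[ℝ] Euc) (ν : Euc) {v : Euc}
    (hv : ⟪v, ν⟫ = 0) (hv1 : ‖v‖ = 1) :
    0 ≤ sSup {t : ℝ | ∃ v w : Euc,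
      ⟪v, ν⟫ = 0 ∧ ⟪w, ν⟫ = 0 ∧ ‖v‖ = 1 ∧ ‖w‖ = 1 ∧ t = |⟪A v, w⟫|} :=
  le_trans (abs_nonneg ⟪A v, v⟫) (le_csSup (aux_bdd A ν) ⟨v, v, hv, hv, hv1, hv1, rfl⟩)

private lemma aux_abs_le {A : Euc →L[ℝ] Euc} {ν : Euc} {M : ℝ}
    (hM : sSup {t : ℝ | ∃ v w : Euc,
      ⟪v, ν⟫ = 0 ∧ ⟪w, ν⟫ = 0 ∧ ‖v‖ = 1 ∧ ‖w‖ = 1 ∧ t = |⟪A v, w⟫|} ≤ M)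
    {v w : Euc} (hv : ⟪v, ν⟫ = 0) (hw : ⟪w, ν⟫ = 0) :
    |⟪A v, w⟫| ≤ M * (‖v‖ * ‖w‖) := by
  rcases eq_or_ne v 0 with rfl | hv0
  · simp
  rcases eq_or_ne w 0 with rfl | hw0
  · simp
  set v' : Euc := ‖v‖⁻¹ • v with hv'def
  set w' : Euc := ‖w‖⁻¹ • w with hw'def
  have hvmem : ⟪v', ν⟫ = 0 := by rw [hv'def, real_inner_smul_left, hv, mul_zero]
  have hwmem : ⟪w', ν⟫ = 0 := by rw [hw'def, real_inner_smul_left, hw, mul_zero]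
  have hv1 : ‖v'‖ = 1 := by
    rw [hv'def, norm_smul, norm_inv, norm_norm, inv_mul_cancel₀ (norm_ne_zero_iff.2 hv0)]
  have hw1 : ‖w'‖ = 1 := by
    rw [hw'def, norm_smul, norm_inv, norm_norm, inv_mul_cancel₀ (norm_ne_zero_iff.2 hw0)]
  have h1 : |⟪A v', w'⟫| ≤ M :=
    le_trans (le_csSup (aux_bdd A ν) ⟨v', w', hvmem, hwmem, hv1, hw1, rfl⟩) hM
  have hvv : v = ‖v‖ • v' := by
    rw [hv'def, smul_smul, mul_inv_cancel₀ (norm_ne_zero_iff.2 hv0), one_smul]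
  have hww : w = ‖w‖ • w' := by
    rw [hw'def, smul_smul, mul_inv_cancel₀ (norm_ne_zero_iff.2 hw0), one_smul]
  have key : |⟪A v, w⟫| = ‖v‖ * ‖w‖ * |⟪A v', w'⟫| := by
    conv_lhs => rw [hvv, hww]
    rw [_root_.map_smul, real_inner_smul_left, real_inner_smul_right, abs_mul, abs_mul,
      abs_of_nonneg (norm_nonneg v), abs_of_nonneg (norm_nonneg w)]
    ring
  rw [key]
  have h2 : 0 ≤ ‖v‖ * ‖w‖ := by positivity
  nlinarith [abs_nonneg ⟪A v', w'⟫]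

set_option maxHeartbeats 2000000 in
private lemma scalar_angle {C₀ γ₁ γ₂ γ₃ u v : ℝ} (hC₀ : 0 < C₀) (hC₀' : C₀ < 1)
    (hg1 : 0 < γ₁) (hg1' : γ₁ ≤ 1 / 2)
    (hu0 : 0 < u) (hu : u ^ 2 = 1 + γ₁ ^ 2)
    (hv0 : 0 < v) (hv : v ^ 2 = 1 + γ₂ ^ 2 + γ₃ ^ 2)
    (h12 : 1 / u ≤ 1 - C₀) (h13 : 1 / v ≤ 1 - C₀)
    (h23 : 1 + γ₁ * γ₂ ≤ (1 - C₀) * (u * v)) (hg2 : 0 ≤ γ₂) :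
    min (C₀ * (2 - C₀)) (1 / 4) ≤ γ₁ ^ 2 ∧
    min (C₀ * (2 - C₀)) (1 / 4) ≤ γ₂ ^ 2 + γ₃ ^ 2 ∧
    min (C₀ * (2 - C₀)) (1 / 4) ≤ (γ₁ - γ₂) ^ 2 + 2 * γ₃ ^ 2 := by
  set s : ℝ := min (C₀ * (2 - C₀)) (1 / 4) with hsdef
  have hsle : s ≤ C₀ * (2 - C₀) := min_le_left _ _
  have h1C : 0 < 1 - C₀ := by linarith
  have h1C2 : 0 ≤ 1 - (1 - C₀) ^ 2 := by nlinarith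
  refine ⟨?_, ?_, ?_⟩
  · have h2 : 1 ≤ (1 - C₀) * u := by rw [div_le_iff₀ hu0] at h12; linarith
    have h2' := mul_le_mul h2 h2 zero_le_one (by positivity)
    have hu' : ((1 - C₀) * u) * ((1 - C₀) * u) = (1 - C₀) ^ 2 * (1 + γ₁ ^ 2) := by
      linear_combination (1 - C₀) ^ 2 * hu
    have h3 : 1 ≤ (1 - C₀) ^ 2 * (1 + γ₁ ^ 2) := by linarith
    linarith [h3, mul_nonneg (sq_nonneg γ₁) h1C2, hsle]
  · have h2 : 1 ≤ (1 - C₀) * v := by rw [div_le_iff₀ hv0] at h13; linarith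
    have h2' := mul_le_mul h2 h2 zero_le_one (by positivity)
    have hv' : ((1 - C₀) * v) * ((1 - C₀) * v) = (1 - C₀) ^ 2 * (1 + γ₂ ^ 2 + γ₃ ^ 2) := by
      linear_combination (1 - C₀) ^ 2 * hv
    have h3 : 1 ≤ (1 - C₀) ^ 2 * (1 + γ₂ ^ 2 + γ₃ ^ 2) := by linarith
    linarith [h3, mul_nonneg (add_nonneg (sq_nonneg γ₂) (sq_nonneg γ₃)) h1C2, hsle]
  · have hp : (0:ℝ) < 1 + γ₁ * γ₂ := by nlinarith
    have hsq := mul_le_mul h23 h23 hp.le (by positivity : (0:ℝ) ≤ (1 - C₀) * (u * v))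
    have hid : ((1 - C₀) * (u * v)) * ((1 - C₀) * (u * v)) =
        (1 - C₀) ^ 2 * ((1 + γ₁ ^ 2) * (1 + γ₂ ^ 2 + γ₃ ^ 2)) := by
      linear_combination ((1 - C₀) ^ 2 * v ^ 2) * hu + ((1 - C₀) ^ 2 * (1 + γ₁ ^ 2)) * hv
    have hq : (1 + γ₁ * γ₂) ^ 2 ≤
        (1 - C₀) ^ 2 * ((1 + γ₁ ^ 2) * (1 + γ₂ ^ 2 + γ₃ ^ 2)) := by nlinarith [hsq, hid]
    have hab : 1 ≤ (1 + γ₁ ^ 2) * (1 + γ₂ ^ 2 + γ₃ ^ 2) := by nlinarith [sq_nonneg γ₁]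
    have key1 : 0 ≤ (1 - (1 - C₀) ^ 2) * ((1 + γ₁ ^ 2) * (1 + γ₂ ^ 2 + γ₃ ^ 2) - 1) :=
      mul_nonneg h1C2 (by linarith)
    have key2 : 0 ≤ γ₃ ^ 2 * (1 - γ₁ ^ 2) := mul_nonneg (sq_nonneg γ₃) (by nlinarith)
    nlinarith [hq, key1, key2, hsle]

set_option maxHeartbeats 2000000 in
private lemma scalar_XY {γ₁ γ₂ γ₃ s M X Y P : ℝ} (hs0 : 0 < s) (hs14 : s ≤ 1 / 4)
    (hg1 : 0 < γ₁) (hg1' : γ₁ ≤ 1 / 2) (hg2 : 0 ≤ γ₂) (hg2' : γ₂ ≤ 1)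
    (hg3 : 0 ≤ γ₃) (hg3' : γ₃ ≤ 1)
    (hA1 : s ≤ γ₁ ^ 2) (hA2 : s ≤ γ₂ ^ 2 + γ₃ ^ 2) (hA3 : s ≤ (γ₁ - γ₂) ^ 2 + 2 * γ₃ ^ 2)
    (hM0 : 0 ≤ M)
    (hE1 : |γ₁ ^ 2 * X + 2 * γ₁ * Y| ≤ 3 * M) (hE2 : |γ₂ ^ 2 * X + 2 * γ₂ * Y| ≤ 3 * M)
    (hE3 : |γ₃ ^ 2 * X + 2 * γ₃ * P| ≤ 3 * M) (hP : γ₁ * |P| ≤ 3 * M) :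
    (s / 3) ^ 3 * |X| ≤ 9 * M ∧ (s / 3) ^ 3 * |Y| ≤ 3 * M := by
  set d : ℝ := s / 3 with hddef
  have hd0 : 0 < d := by rw [hddef]; linarith
  have hd1 : d ≤ 1 / 12 := by rw [hddef]; linarith
  have hdg1 : d ≤ γ₁ := by
    linarith [mul_nonneg hg1.le (show (0:ℝ) ≤ 1 - γ₁ by linarith), hA1]
  have hXnn := abs_nonneg X
  have hYnn := abs_nonneg Y
  have hPnn := abs_nonneg P
  have hX : d ^ 3 * |X| ≤ 9 * M := by
    rcases le_or_gt d γ₃ with hcase | hcase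
    · have e1 : |γ₃ ^ 2 * X| = γ₃ ^ 2 * |X| := by
        rw [abs_mul, abs_of_nonneg (sq_nonneg γ₃)]
      have e2 : |2 * γ₃ * P| = 2 * γ₃ * |P| := by
        rw [abs_mul, abs_of_nonneg (by linarith : (0:ℝ) ≤ 2 * γ₃)]
      have t1 : γ₃ ^ 2 * |X| ≤ 3 * M + 2 * γ₃ * |P| := by
        have h := abs_sub (γ₃ ^ 2 * X + 2 * γ₃ * P) (2 * γ₃ * P)
        rw [show γ₃ ^ 2 * X + 2 * γ₃ * P - 2 * γ₃ * P = γ₃ ^ 2 * X from by ring] at h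
        rw [← e1, ← e2]; linarith
      have t2 := mul_le_mul_of_nonneg_left t1 hg1.le
      have p1 := mul_le_mul_of_nonneg_left hP (by linarith : (0:ℝ) ≤ 2 * γ₃)
      have p2 := mul_nonneg (sub_nonneg.2 hg3') hM0
      have p3 := mul_nonneg (show (0:ℝ) ≤ 1 / 2 - γ₁ by linarith) hM0
      have t3 : γ₁ * (γ₃ ^ 2 * |X|) ≤ 8 * M := by nlinarith [t2, p1, p2, p3]
      have h5 : d * (d * d) ≤ γ₁ * (γ₃ * γ₃) :=
        mul_le_mul hdg1 (mul_le_mul hcase hcase hd0.le hg3) (by positivity) hg1.le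
      have t4 : d ^ 3 * |X| ≤ γ₁ * (γ₃ ^ 2 * |X|) := by
        have h6 := mul_le_mul_of_nonneg_right h5 hXnn
        nlinarith [h6]
      linarith
    · have hγ₃sq : γ₃ ^ 2 < d := by
        nlinarith [mul_nonneg hg3 (sub_nonneg.2 hg3'), hcase]
      have hg2lb : 2 * d ≤ γ₂ := by
        nlinarith [hA2, hγ₃sq, mul_nonneg hg2 (sub_nonneg.2 hg2'), hddef]
      have habs1 : |γ₁ - γ₂| ≤ 1 := abs_le.2 ⟨by linarith, by linarith⟩
      have habs12 : d ≤ |γ₁ - γ₂| := by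
        nlinarith [sq_abs (γ₁ - γ₂), mul_nonneg (abs_nonneg (γ₁ - γ₂)) (sub_nonneg.2 habs1),
          hA3, hγ₃sq, hddef]
      have h1 : |γ₂ * (γ₁ ^ 2 * X + 2 * γ₁ * Y)| ≤ γ₂ * (3 * M) := by
        rw [abs_mul, abs_of_nonneg hg2]; exact mul_le_mul_of_nonneg_left hE1 hg2
      have h2 : |γ₁ * (γ₂ ^ 2 * X + 2 * γ₂ * Y)| ≤ γ₁ * (3 * M) := by
        rw [abs_mul, abs_of_nonneg hg1.le]; exact mul_le_mul_of_nonneg_left hE2 hg1.le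
      have h3 : |γ₁ * γ₂ * (γ₁ - γ₂) * X| = γ₁ * γ₂ * |γ₁ - γ₂| * |X| := by
        rw [abs_mul, abs_mul, abs_mul, abs_of_pos hg1, abs_of_nonneg hg2]
      have hcomb : γ₁ * γ₂ * |γ₁ - γ₂| * |X| ≤ 5 * M := by
        have h4 := abs_sub (γ₂ * (γ₁ ^ 2 * X + 2 * γ₁ * Y)) (γ₁ * (γ₂ ^ 2 * X + 2 * γ₂ * Y))
        rw [show γ₂ * (γ₁ ^ 2 * X + 2 * γ₁ * Y) - γ₁ * (γ₂ ^ 2 * X + 2 * γ₂ * Y)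
            = γ₁ * γ₂ * (γ₁ - γ₂) * X from by ring] at h4
        have p3 := mul_nonneg (show (0:ℝ) ≤ 1 / 2 - γ₁ by linarith) hM0
        have p4 := mul_nonneg (sub_nonneg.2 hg2') hM0
        rw [← h3] at *
        nlinarith [h4, h1, h2, p3, p4]
      have h5 : d * d * d ≤ γ₁ * γ₂ * |γ₁ - γ₂| :=
        mul_le_mul3 hd0.le hd0.le hd0.le hdg1 (by linarith) habs12
      have t4 : d ^ 3 * |X| ≤ γ₁ * γ₂ * |γ₁ - γ₂| * |X| := by
        have h6 := mul_le_mul_of_nonneg_right h5 hXnn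
        nlinarith [h6]
      linarith
  refine ⟨hX, ?_⟩
  have h2Y : 2 * γ₁ * |Y| ≤ 3 * M + γ₁ ^ 2 * |X| := by
    have e1 : |2 * γ₁ * Y| = 2 * γ₁ * |Y| := by
      rw [abs_mul, abs_of_nonneg (by linarith : (0:ℝ) ≤ 2 * γ₁)]
    have e2 : |γ₁ ^ 2 * X| = γ₁ ^ 2 * |X| := by rw [abs_mul, abs_of_nonneg (sq_nonneg γ₁)]
    have h := abs_sub (γ₁ ^ 2 * X + 2 * γ₁ * Y) (γ₁ ^ 2 * X)
    rw [show γ₁ ^ 2 * X + 2 * γ₁ * Y - γ₁ ^ 2 * X = 2 * γ₁ * Y from by ring] at h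
    rw [← e1, ← e2]; linarith
  have k0 := mul_le_mul_of_nonneg_left h2Y (le_of_lt (pow_pos hd0 3))
  have k2 : γ₁ ^ 2 * (d ^ 3 * |X|) ≤ γ₁ ^ 2 * (9 * M) :=
    mul_le_mul_of_nonneg_left hX (sq_nonneg γ₁)
  have k3 : 3 * d ^ 3 + 9 * γ₁ ^ 2 ≤ 6 * γ₁ := by
    have q1 := mul_nonneg (mul_nonneg hd0.le hd0.le) (sub_nonneg.2 hdg1)
    have q2 := mul_nonneg hg1.le (show (0:ℝ) ≤ 1 / 144 - d ^ 2 by nlinarith [hd1, hd0])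
    have q3 := mul_nonneg hg1.le (show (0:ℝ) ≤ 1 / 2 - γ₁ by linarith)
    nlinarith [q1, q2, q3]
  nlinarith [k0, k2, mul_le_mul_of_nonneg_right k3 hM0, hg1]

set_option maxHeartbeats 1000000 in
private lemma scalar_final {d M R R' W Z1 Z2 Z3 Z4 Z5 XB YB XX a1 a2 b1 b2 : ℝ}
    (hd0 : 0 < d) (hd1 : d ≤ 1 / 12) (hM0 : 0 ≤ M) (hR : 0 ≤ R) (hR' : 0 ≤ R')
    (hZ1n : 0 ≤ Z1) (hZ2n : 0 ≤ Z2) (hZ3n : 0 ≤ Z3) (hZ4n : 0 ≤ Z4) (hZ5n : 0 ≤ Z5)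
    (hXBn : 0 ≤ XB) (hYBn : 0 ≤ YB) (hXXn : 0 ≤ XX)
    (ha1n : 0 ≤ a1) (ha2n : 0 ≤ a2) (hb1n : 0 ≤ b1) (hb2n : 0 ≤ b2)
    (ha1 : a1 ≤ R) (ha2 : a2 ≤ R) (hb1 : b1 ≤ R') (hb2 : b2 ≤ R')
    (hW : W ≤ Z1 + b2 * Z2 + b1 * Z3 + a2 * Z4 + a1 * Z5 + a2 * b2 * XB +
      a2 * b1 * YB + a1 * b2 * YB + a1 * b1 * XX)
    (hZ1 : Z1 ≤ M * (R * R')) (hZ2 : Z2 ≤ M * R) (hZ3 : d * Z3 ≤ 3 * (M * R))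
    (hZ4 : Z4 ≤ M * R') (hZ5 : d * Z5 ≤ 3 * (M * R'))
    (hXB : XB ≤ M) (hYB : d ^ 3 * YB ≤ 3 * M) (hXX : d ^ 3 * XX ≤ 9 * M) :
    d ^ 3 * W ≤ 25 * (M * (R * R')) := by
  have hd3 : (0:ℝ) ≤ d ^ 3 := by positivity
  have hdc : d ≤ 1 := by linarith
  have hd31 : d ^ 3 ≤ 1 := pow_le_one₀ hd0.le hdc
  have hd21 : d ^ 2 ≤ 1 := pow_le_one₀ hd0.le hdc
  have hMRR : 0 ≤ M * (R * R') := mul_nonneg hM0 (mul_nonneg hR hR')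
  have r1 : d ^ 3 * Z1 ≤ M * (R * R') := by nlinarith [hZ1, hZ1n, hd31]
  have r2 : d ^ 3 * (b2 * Z2) ≤ M * (R * R') := by
    have m := mul_le_mul3 hd3 hb2n hZ2n hd31 hb2 hZ2; nlinarith [m]
  have r3 : d ^ 3 * (b1 * Z3) ≤ 3 * (M * (R * R')) := by
    have m := mul_le_mul3 (sq_nonneg d) hb1n (mul_nonneg hd0.le hZ3n) hd21 hb1 hZ3
    nlinarith [m]
  have r4 : d ^ 3 * (a2 * Z4) ≤ M * (R * R') := by
    have m := mul_le_mul3 hd3 ha2n hZ4n hd31 ha2 hZ4; nlinarith [m]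
  have r5 : d ^ 3 * (a1 * Z5) ≤ 3 * (M * (R * R')) := by
    have m := mul_le_mul3 (sq_nonneg d) ha1n (mul_nonneg hd0.le hZ5n) hd21 ha1 hZ5
    nlinarith [m]
  have r6 : d ^ 3 * (a2 * b2 * XB) ≤ M * (R * R') := by
    have m := mul_le_mul3 ha2n hb2n hXBn ha2 hb2 hXB
    have m2 := mul_le_mul_of_nonneg_left m hd3
    nlinarith [m2, mul_nonneg (sub_nonneg.2 hd31) (mul_nonneg (mul_nonneg hR hR') hM0)]
  have r7 : d ^ 3 * (a2 * b1 * YB) ≤ 3 * (M * (R * R')) := by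
    have m := mul_le_mul3 ha2n hb1n (mul_nonneg hd3 hYBn) ha2 hb1 hYB; nlinarith [m]
  have r8 : d ^ 3 * (a1 * b2 * YB) ≤ 3 * (M * (R * R')) := by
    have m := mul_le_mul3 ha1n hb2n (mul_nonneg hd3 hYBn) ha1 hb2 hYB; nlinarith [m]
  have r9 : d ^ 3 * (a1 * b1 * XX) ≤ 9 * (M * (R * R')) := by
    have m := mul_le_mul3 ha1n hb1n (mul_nonneg hd3 hXXn) ha1 hb1 hXX; nlinarith [m]
  have h := mul_le_mul_of_nonneg_left hW hd3
  nlinarith [h, r1, r2, r3, r4, r5, r6, r7, r8, r9]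

set_option maxHeartbeats 4000000 in
private lemma stmt9_main {C₀ γ₁ γ₂ γ₃ : ℝ} (hC₀ : 0 < C₀) (hC₀' : C₀ < 1)
    (hg1 : 0 < γ₁) (hg1' : γ₁ ≤ 1 / 2) (hg2 : 0 ≤ γ₂) (hg2' : γ₂ ≤ 1)
    (hg3 : 0 ≤ γ₃) (hg3' : γ₃ ≤ 1)
    {i1 i2 i3 : Fin n} (e12 : i2 ≠ i1) (e13 : i3 ≠ i1) (e23 : i3 ≠ i2)
    {ν₁ ν₂ ν₃ : Euc}
    (hν₁ : ν₁ = -EuclideanSpace.single i1 (1 : ℝ))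
    (hν₂ : ν₂ = (1 / Real.sqrt (1 + γ₁ ^ 2)) •
        (-EuclideanSpace.single i1 (1 : ℝ) + γ₁ • EuclideanSpace.single i2 (1 : ℝ)))
    (hν₃ : ν₃ = (1 / Real.sqrt (1 + γ₂ ^ 2 + γ₃ ^ 2)) •
        (-EuclideanSpace.single i1 (1 : ℝ) + γ₂ • EuclideanSpace.single i2 (1 : ℝ) +
          γ₃ • EuclideanSpace.single i3 (1 : ℝ)))
    (hn12 : ⟪ν₁, ν₂⟫ ≤ 1 - C₀) (hn13 : ⟪ν₁, ν₃⟫ ≤ 1 - C₀) (hn23 : ⟪ν₂, ν₃⟫ ≤ 1 - C₀)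
    {A : Euc →L[ℝ] Euc} (hsymm : ∀ x y : Euc, ⟪A x, y⟫ = ⟪A y, x⟫)
    {M : ℝ} (hM0 : 0 ≤ M)
    (hb1 : ∀ v w : Euc, ⟪v, ν₁⟫ = 0 → ⟪w, ν₁⟫ = 0 → |⟪A v, w⟫| ≤ M * (‖v‖ * ‖w‖))
    (hb2 : ∀ v w : Euc, ⟪v, ν₂⟫ = 0 → ⟪w, ν₂⟫ = 0 → |⟪A v, w⟫| ≤ M * (‖v‖ * ‖w‖))
    (hb3 : ∀ v w : Euc, ⟪v, ν₃⟫ = 0 → ⟪w, ν₃⟫ = 0 → |⟪A v, w⟫| ≤ M * (‖v‖ * ‖w‖)) :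
    ‖A‖ ≤ 1000 / (min (C₀ * (2 - C₀)) (1 / 4)) ^ 3 * M := by
  have h1C : 0 < 1 - C₀ := by linarith only [hC₀']
  have hsq1pos : (0:ℝ) < 1 + γ₁ ^ 2 := by positivity
  have hsq2pos : (0:ℝ) < 1 + γ₂ ^ 2 + γ₃ ^ 2 := by positivity
  have sqrt1 : 0 < Real.sqrt (1 + γ₁ ^ 2) := Real.sqrt_pos.2 hsq1pos
  have sqrt2 : 0 < Real.sqrt (1 + γ₂ ^ 2 + γ₃ ^ 2) := Real.sqrt_pos.2 hsq2pos
  have sq1 : Real.sqrt (1 + γ₁ ^ 2) ^ 2 = 1 + γ₁ ^ 2 := Real.sq_sqrt hsq1pos.le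
  have sq2 : Real.sqrt (1 + γ₂ ^ 2 + γ₃ ^ 2) ^ 2 = 1 + γ₂ ^ 2 + γ₃ ^ 2 :=
    Real.sq_sqrt hsq2pos.le
  -- inner product formulas
  have hip1 : ∀ v : Euc, ⟪v, ν₁⟫ = -(v i1) := by
    intro v
    rw [hν₁]
    simp [inner_neg_right, EuclideanSpace.inner_single_right]
  have hip2 : ∀ v : Euc, ⟪v, ν₂⟫ = (1 / Real.sqrt (1 + γ₁ ^ 2)) * (γ₁ * v i2 - v i1) := by
    intro v
    rw [hν₂]
    simp [inner_add_right, inner_neg_right, real_inner_smul_right,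
      EuclideanSpace.inner_single_right]
    ring
  have hip3 : ∀ v : Euc, ⟪v, ν₃⟫ =
      (1 / Real.sqrt (1 + γ₂ ^ 2 + γ₃ ^ 2)) * (γ₂ * v i2 + γ₃ * v i3 - v i1) := by
    intro v
    rw [hν₃]
    simp [inner_add_right, inner_neg_right, real_inner_smul_right,
      EuclideanSpace.inner_single_right]
    ring
  -- scalar forms of the angle conditions
  have hv12 : 1 / Real.sqrt (1 + γ₁ ^ 2) ≤ 1 - C₀ := by
    have h := hn12
    rw [hip2 ν₁, hν₁] at h
    simpa [EuclideanSpace.single_apply, e12, e12.symm] using h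
  have hv13 : 1 / Real.sqrt (1 + γ₂ ^ 2 + γ₃ ^ 2) ≤ 1 - C₀ := by
    have h := hn13
    rw [hip3 ν₁, hν₁] at h
    simpa [EuclideanSpace.single_apply, e12, e12.symm, e13, e13.symm] using h
  have hv23 : (1 + γ₁ * γ₂) ≤ (1 - C₀) * (Real.sqrt (1 + γ₁ ^ 2) *
      Real.sqrt (1 + γ₂ ^ 2 + γ₃ ^ 2)) := by
    have h := hn23
    rw [hip3 ν₂, hν₂] at h
    have h2 : (1 / Real.sqrt (1 + γ₂ ^ 2 + γ₃ ^ 2)) * (1 / Real.sqrt (1 + γ₁ ^ 2)) *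
        (1 + γ₁ * γ₂) ≤ 1 - C₀ := by
      rw [show ((1 / Real.sqrt (1 + γ₁ ^ 2)) •
          (-EuclideanSpace.single i1 (1 : ℝ) + γ₁ • EuclideanSpace.single i2 (1 : ℝ))) i2
          = (1 / Real.sqrt (1 + γ₁ ^ 2)) * γ₁ from by
            simp [EuclideanSpace.single_apply, e12, e12.symm],
        show ((1 / Real.sqrt (1 + γ₁ ^ 2)) •
          (-EuclideanSpace.single i1 (1 : ℝ) + γ₁ • EuclideanSpace.single i2 (1 : ℝ))) i3
          = 0 from by
            simp [EuclideanSpace.single_apply, e13, e13.symm, e23, e23.symm],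
        show ((1 / Real.sqrt (1 + γ₁ ^ 2)) •
          (-EuclideanSpace.single i1 (1 : ℝ) + γ₁ • EuclideanSpace.single i2 (1 : ℝ))) i1
          = (1 / Real.sqrt (1 + γ₁ ^ 2)) * (-1) from by
            simp [EuclideanSpace.single_apply, e12, e12.symm]] at h
      calc (1 / Real.sqrt (1 + γ₂ ^ 2 + γ₃ ^ 2)) * (1 / Real.sqrt (1 + γ₁ ^ 2)) *
            (1 + γ₁ * γ₂)
          = (1 / Real.sqrt (1 + γ₂ ^ 2 + γ₃ ^ 2)) *
            (γ₂ * ((1 / Real.sqrt (1 + γ₁ ^ 2)) * γ₁) + γ₃ * 0 -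
              (1 / Real.sqrt (1 + γ₁ ^ 2)) * (-1)) := by ring
        _ ≤ 1 - C₀ := h
    rw [div_mul_div_comm, one_mul, div_mul_eq_mul_div, one_mul,
      div_le_iff₀ (by positivity)] at h2
    calc 1 + γ₁ * γ₂ ≤ (1 - C₀) * (Real.sqrt (1 + γ₂ ^ 2 + γ₃ ^ 2) *
          Real.sqrt (1 + γ₁ ^ 2)) := h2
      _ = (1 - C₀) * (Real.sqrt (1 + γ₁ ^ 2) * Real.sqrt (1 + γ₂ ^ 2 + γ₃ ^ 2)) := by ring
  obtain ⟨hA1, hA2, hA3⟩ := scalar_angle hC₀ hC₀' hg1 hg1' sqrt1 sq1 sqrt2 sq2 hv12 hv13 hv23 hg2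
  set s : ℝ := min (C₀ * (2 - C₀)) (1 / 4) with hsdef
  have hs0 : 0 < s := lt_min (by nlinarith only [hC₀, hC₀']) (by norm_num)
  have hs14 : s ≤ 1 / 4 := min_le_right _ _
  set d : ℝ := s / 3 with hddef
  have hd0 : 0 < d := by rw [hddef]; linarith only [hs0]
  have hd1 : d ≤ 1 / 12 := by rw [hddef]; linarith only [hs14]
  have hdg1 : d ≤ γ₁ := by
    have h1 : (0:ℝ) ≤ γ₁ * (1 - γ₁) :=
      mul_nonneg hg1.le (by linarith only [hg1'] : (0:ℝ) ≤ 1 - γ₁)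
    linarith only [h1, hA1, hddef, hs0]
  -- coordinate forms of the hyperplane bounds
  have hb1' : ∀ v w : Euc, v i1 = 0 → w i1 = 0 → |⟪A v, w⟫| ≤ M * (‖v‖ * ‖w‖) :=
    fun v w hv hw => hb1 v w (by rw [hip1, hv, neg_zero]) (by rw [hip1, hw, neg_zero])
  have hb2' : ∀ v w : Euc, γ₁ * v i2 - v i1 = 0 → γ₁ * w i2 - w i1 = 0 →
      |⟪A v, w⟫| ≤ M * (‖v‖ * ‖w‖) :=
    fun v w hv hw => hb2 v w (by rw [hip2, hv, mul_zero]) (by rw [hip2, hw, mul_zero])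
  have hb3' : ∀ v w : Euc, γ₂ * v i2 + γ₃ * v i3 - v i1 = 0 →
      γ₂ * w i2 + γ₃ * w i3 - w i1 = 0 → |⟪A v, w⟫| ≤ M * (‖v‖ * ‖w‖) :=
    fun v w hv hw => hb3 v w (by rw [hip3, hv, mul_zero]) (by rw [hip3, hw, mul_zero])
  -- basis vectors
  set ε₁ : Euc := EuclideanSpace.single i1 (1 : ℝ) with hε₁def
  set ε₂ : Euc := EuclideanSpace.single i2 (1 : ℝ) with hε₂def
  set ε₃ : Euc := EuclideanSpace.single i3 (1 : ℝ) with hε₃def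
  have ce11 : ε₁ i1 = 1 := by simp [hε₁def, EuclideanSpace.single_apply]
  have ce12 : ε₁ i2 = 0 := by simp [hε₁def, EuclideanSpace.single_apply, e12, e12.symm]
  have ce13 : ε₁ i3 = 0 := by simp [hε₁def, EuclideanSpace.single_apply, e13, e13.symm]
  have ce21 : ε₂ i1 = 0 := by simp [hε₂def, EuclideanSpace.single_apply, e12, e12.symm]
  have ce22 : ε₂ i2 = 1 := by simp [hε₂def, EuclideanSpace.single_apply]
  have ce23 : ε₂ i3 = 0 := by simp [hε₂def, EuclideanSpace.single_apply, e23, e23.symm]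
  have ce31 : ε₃ i1 = 0 := by simp [hε₃def, EuclideanSpace.single_apply, e13, e13.symm]
  have ce32 : ε₃ i2 = 0 := by simp [hε₃def, EuclideanSpace.single_apply, e23, e23.symm]
  have ce33 : ε₃ i3 = 1 := by simp [hε₃def, EuclideanSpace.single_apply]
  have nε1 : ‖ε₁‖ = 1 := by rw [hε₁def]; simp
  have nε2 : ‖ε₂‖ = 1 := by rw [hε₂def]; simp
  have nε3 : ‖ε₃‖ = 1 := by rw [hε₃def]; simp
  have hcoord : ∀ (z : Euc) (i : Fin n), |z i| ≤ ‖z‖ := by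
    intro z i
    have h := abs_real_inner_le_norm (EuclideanSpace.single i (1 : ℝ)) z
    simpa [EuclideanSpace.inner_single_left] using h
  -- the auxiliary vector in Π₂ and the key bound
  set u2 : Euc := γ₁ • ε₁ + ε₂ with hu2def
  have cu21 : u2 i1 = γ₁ := by simp [hu2def, ce11, ce21]
  have cu22 : u2 i2 = 1 := by simp [hu2def, ce12, ce22]
  have mu2 : γ₁ * u2 i2 - u2 i1 = 0 := by rw [cu21, cu22]; ring
  have hnu2 : ‖u2‖ * ‖u2‖ = γ₁ ^ 2 + 1 := by
    rw [← real_inner_self_eq_norm_mul_norm, hu2def, hε₁def, hε₂def]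
    simp [-inner_self_eq_norm_sq_to_K, inner_add_left, inner_add_right, real_inner_smul_left, real_inner_smul_right,
      EuclideanSpace.inner_single_left, EuclideanSpace.single_apply, e12, e12.symm]
    ring
  have hnu2' : ‖u2‖ ≤ 2 := by nlinarith only [hnu2, norm_nonneg u2, hg1, hg1']
  have hkey1 : ∀ v : Euc, v i1 = 0 → v i2 = 0 → γ₁ * |⟪A v, ε₁⟫| ≤ 3 * (M * ‖v‖) := by
    intro v h1 h2
    have hu : |⟪A v, u2⟫| ≤ M * (‖v‖ * ‖u2‖) := hb2' v u2 (by rw [h1, h2]; ring) mu2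
    have hexp : ⟪A v, u2⟫ = γ₁ * ⟪A v, ε₁⟫ + ⟪A v, ε₂⟫ := by
      rw [hu2def, inner_add_right, real_inner_smul_right]
    have h2' : |⟪A v, ε₂⟫| ≤ M * ‖v‖ := by
      have h := hb1' v ε₂ h1 ce21
      rwa [nε2, mul_one] at h
    have hub : |⟪A v, u2⟫| ≤ 2 * (M * ‖v‖) := by
      have h3 : M * (‖v‖ * ‖u2‖) ≤ M * (‖v‖ * 2) :=
        mul_le_mul_of_nonneg_left (mul_le_mul_of_nonneg_left hnu2' (norm_nonneg v)) hM0
      calc |⟪A v, u2⟫| ≤ M * (‖v‖ * ‖u2‖) := hu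
        _ ≤ M * (‖v‖ * 2) := h3
        _ = 2 * (M * ‖v‖) := by ring
    have habs : |γ₁ * ⟪A v, ε₁⟫| ≤ 2 * (M * ‖v‖) + M * ‖v‖ := by
      refine abs_helper ?_ h2'
      rw [← hexp]; exact hub
    rw [abs_mul, abs_of_pos hg1] at habs
    linarith only [habs]
  -- diagonal entries from Π₁
  have hB22 : |⟪A ε₂, ε₂⟫| ≤ M := by
    have h := hb1' ε₂ ε₂ ce21 ce21
    rwa [nε2, mul_one, mul_one] at h
  have hB33 : |⟪A ε₃, ε₃⟫| ≤ M := by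
    have h := hb1' ε₃ ε₃ ce31 ce31
    rwa [nε3, mul_one, mul_one] at h
  -- E1
  have hu2e : ⟪A u2, u2⟫ = γ₁ ^ 2 * ⟪A ε₁, ε₁⟫ + 2 * γ₁ * ⟪A ε₁, ε₂⟫ + ⟪A ε₂, ε₂⟫ := by
    rw [hu2def]
    simp only [map_add, ContinuousLinearMap.map_smul, inner_add_left, inner_add_right,
      real_inner_smul_left, real_inner_smul_right]
    rw [hsymm ε₂ ε₁]; ring
  have hE1 : |γ₁ ^ 2 * ⟪A ε₁, ε₁⟫ + 2 * γ₁ * ⟪A ε₁, ε₂⟫| ≤ 3 * M := by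
    have hm : |⟪A u2, u2⟫| ≤ 2 * M := by
      have h := hb2' u2 u2 mu2 mu2
      rw [hnu2] at h
      have h2 := mul_nonneg hM0 (show (0:ℝ) ≤ 1 - γ₁ ^ 2 by nlinarith only [hg1, hg1'])
      linarith only [h, h2]
    rw [hu2e, show γ₁ ^ 2 * ⟪A ε₁, ε₁⟫ + 2 * γ₁ * ⟪A ε₁, ε₂⟫ + ⟪A ε₂, ε₂⟫
        = (γ₁ ^ 2 * ⟪A ε₁, ε₁⟫ + 2 * γ₁ * ⟪A ε₁, ε₂⟫) + ⟪A ε₂, ε₂⟫ from by ring] at hm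
    have := abs_helper hm hB22
    linarith only [this]
  -- E2 via w1 ∈ Π₃
  set w1 : Euc := γ₂ • ε₁ + ε₂ with hw1def
  have cw11 : w1 i1 = γ₂ := by simp [hw1def, ce11, ce21]
  have cw12 : w1 i2 = 1 := by simp [hw1def, ce12, ce22]
  have cw13 : w1 i3 = 0 := by simp [hw1def, ce13, ce23]
  have mw1 : γ₂ * w1 i2 + γ₃ * w1 i3 - w1 i1 = 0 := by rw [cw11, cw12, cw13]; ring
  have hnw1 : ‖w1‖ * ‖w1‖ = γ₂ ^ 2 + 1 := by
    rw [← real_inner_self_eq_norm_mul_norm, hw1def, hε₁def, hε₂def]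
    simp [-inner_self_eq_norm_sq_to_K, inner_add_left, inner_add_right, real_inner_smul_left, real_inner_smul_right,
      EuclideanSpace.inner_single_left, EuclideanSpace.single_apply, e12, e12.symm]
    ring
  have hw1e : ⟪A w1, w1⟫ = γ₂ ^ 2 * ⟪A ε₁, ε₁⟫ + 2 * γ₂ * ⟪A ε₁, ε₂⟫ + ⟪A ε₂, ε₂⟫ := by
    rw [hw1def]
    simp only [map_add, ContinuousLinearMap.map_smul, inner_add_left, inner_add_right,
      real_inner_smul_left, real_inner_smul_right]
    rw [hsymm ε₂ ε₁]; ring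
  have hE2 : |γ₂ ^ 2 * ⟪A ε₁, ε₁⟫ + 2 * γ₂ * ⟪A ε₁, ε₂⟫| ≤ 3 * M := by
    have hm : |⟪A w1, w1⟫| ≤ 2 * M := by
      have h := hb3' w1 w1 mw1 mw1
      rw [hnw1] at h
      have h2 := mul_nonneg hM0 (show (0:ℝ) ≤ 1 - γ₂ ^ 2 by nlinarith only [hg2, hg2'])
      linarith only [h, h2]
    rw [hw1e, show γ₂ ^ 2 * ⟪A ε₁, ε₁⟫ + 2 * γ₂ * ⟪A ε₁, ε₂⟫ + ⟪A ε₂, ε₂⟫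
        = (γ₂ ^ 2 * ⟪A ε₁, ε₁⟫ + 2 * γ₂ * ⟪A ε₁, ε₂⟫) + ⟪A ε₂, ε₂⟫ from by ring] at hm
    have := abs_helper hm hB22
    linarith only [this]
  -- E3 via w2 ∈ Π₃
  set w2 : Euc := γ₃ • ε₁ + ε₃ with hw2def
  have cw21 : w2 i1 = γ₃ := by simp [hw2def, ce11, ce31]
  have cw22 : w2 i2 = 0 := by simp [hw2def, ce12, ce32]
  have cw23 : w2 i3 = 1 := by simp [hw2def, ce13, ce33]
  have mw2 : γ₂ * w2 i2 + γ₃ * w2 i3 - w2 i1 = 0 := by rw [cw21, cw22, cw23]; ring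
  have hnw2 : ‖w2‖ * ‖w2‖ = γ₃ ^ 2 + 1 := by
    rw [← real_inner_self_eq_norm_mul_norm, hw2def, hε₁def, hε₃def]
    simp [-inner_self_eq_norm_sq_to_K, inner_add_left, inner_add_right, real_inner_smul_left, real_inner_smul_right,
      EuclideanSpace.inner_single_left, EuclideanSpace.single_apply, e13, e13.symm]
    ring
  have hw2e : ⟪A w2, w2⟫ = γ₃ ^ 2 * ⟪A ε₁, ε₁⟫ + 2 * γ₃ * ⟪A ε₁, ε₃⟫ + ⟪A ε₃, ε₃⟫ := by
    rw [hw2def]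
    simp only [map_add, ContinuousLinearMap.map_smul, inner_add_left, inner_add_right,
      real_inner_smul_left, real_inner_smul_right]
    rw [hsymm ε₃ ε₁]; ring
  have hE3 : |γ₃ ^ 2 * ⟪A ε₁, ε₁⟫ + 2 * γ₃ * ⟪A ε₁, ε₃⟫| ≤ 3 * M := by
    have hm : |⟪A w2, w2⟫| ≤ 2 * M := by
      have h := hb3' w2 w2 mw2 mw2
      rw [hnw2] at h
      have h2 := mul_nonneg hM0 (show (0:ℝ) ≤ 1 - γ₃ ^ 2 by nlinarith only [hg3, hg3'])
      linarith only [h, h2]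
    rw [hw2e, show γ₃ ^ 2 * ⟪A ε₁, ε₁⟫ + 2 * γ₃ * ⟪A ε₁, ε₃⟫ + ⟪A ε₃, ε₃⟫
        = (γ₃ ^ 2 * ⟪A ε₁, ε₁⟫ + 2 * γ₃ * ⟪A ε₁, ε₃⟫) + ⟪A ε₃, ε₃⟫ from by ring] at hm
    have := abs_helper hm hB33
    linarith only [this]
  have hP : γ₁ * |⟪A ε₁, ε₃⟫| ≤ 3 * M := by
    have h := hkey1 ε₃ ce31 ce32
    rw [nε3, mul_one, hsymm ε₃ ε₁] at h
    exact h
  obtain ⟨hX0, hY0⟩ := scalar_XY hs0 hs14 hg1 hg1' hg2 hg2' hg3 hg3' hA1 hA2 hA3 hM0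
    hE1 hE2 hE3 hP
  have hX : d ^ 3 * |⟪A ε₁, ε₁⟫| ≤ 9 * M := hX0
  have hY : d ^ 3 * |⟪A ε₁, ε₂⟫| ≤ 3 * M := hY0
  -- main bilinear bound
  have hmain : ∀ x y : Euc, |⟪A x, y⟫| ≤ 1000 / s ^ 3 * M * (‖x‖ * ‖y‖) := by
    intro x y
    set x' : Euc := x - x i1 • ε₁ - x i2 • ε₂ with hx'def
    set y' : Euc := y - y i1 • ε₁ - y i2 • ε₂ with hy'def
    have hx1 : x' i1 = 0 := by simp [hx'def, ce11, ce21]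
    have hx2 : x' i2 = 0 := by simp [hx'def, ce12, ce22]
    have hy1 : y' i1 = 0 := by simp [hy'def, ce11, ce21]
    have hy2 : y' i2 = 0 := by simp [hy'def, ce12, ce22]
    have hipx : ⟪x', x'⟫ = ⟪x, x⟫ - (x i1) ^ 2 - (x i2) ^ 2 := by
      rw [hx'def, hε₁def, hε₂def]
      simp [-inner_self_eq_norm_sq_to_K, inner_sub_left, inner_sub_right, real_inner_smul_left, real_inner_smul_right,
        EuclideanSpace.inner_single_left, EuclideanSpace.inner_single_right,
        EuclideanSpace.single_apply, e12, e12.symm, real_inner_comm x]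
      ring
    have hipy : ⟪y', y'⟫ = ⟪y, y⟫ - (y i1) ^ 2 - (y i2) ^ 2 := by
      rw [hy'def, hε₁def, hε₂def]
      simp [-inner_self_eq_norm_sq_to_K, inner_sub_left, inner_sub_right, real_inner_smul_left, real_inner_smul_right,
        EuclideanSpace.inner_single_left, EuclideanSpace.inner_single_right,
        EuclideanSpace.single_apply, e12, e12.symm, real_inner_comm y]
      ring
    have hnx' : ‖x'‖ ≤ ‖x‖ := by
      nlinarith only [hipx, real_inner_self_eq_norm_sq x, real_inner_self_eq_norm_sq x',
        norm_nonneg x, norm_nonneg x', sq_nonneg (x i1), sq_nonneg (x i2)]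
    have hny' : ‖y'‖ ≤ ‖y‖ := by
      nlinarith only [hipy, real_inner_self_eq_norm_sq y, real_inner_self_eq_norm_sq y',
        norm_nonneg y, norm_nonneg y', sq_nonneg (y i1), sq_nonneg (y i2)]
    have hxx : x = x' + x i1 • ε₁ + x i2 • ε₂ := by rw [hx'def]; abel
    have hyy : y = y' + y i1 • ε₁ + y i2 • ε₂ := by rw [hy'def]; abel
    have hexp : ⟪A x, y⟫ = ⟪A x', y'⟫ + y i2 * ⟪A x', ε₂⟫ + y i1 * ⟪A x', ε₁⟫ +
        x i2 * ⟪A ε₂, y'⟫ + x i1 * ⟪A ε₁, y'⟫ + x i2 * y i2 * ⟪A ε₂, ε₂⟫ +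
        x i2 * y i1 * ⟪A ε₁, ε₂⟫ + x i1 * y i2 * ⟪A ε₁, ε₂⟫ +
        x i1 * y i1 * ⟪A ε₁, ε₁⟫ := by
      conv_lhs => rw [hxx, hyy]
      simp only [map_add, ContinuousLinearMap.map_smul, inner_add_left, inner_add_right,
        real_inner_smul_left, real_inner_smul_right]
      rw [hsymm ε₂ ε₁]; ring
    have h9 : |⟪A x, y⟫| ≤ |⟪A x', y'⟫| + |y i2| * |⟪A x', ε₂⟫| + |y i1| * |⟪A x', ε₁⟫| +
        |x i2| * |⟪A ε₂, y'⟫| + |x i1| * |⟪A ε₁, y'⟫| + |x i2| * |y i2| * |⟪A ε₂, ε₂⟫| +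
        |x i2| * |y i1| * |⟪A ε₁, ε₂⟫| + |x i1| * |y i2| * |⟪A ε₁, ε₂⟫| +
        |x i1| * |y i1| * |⟪A ε₁, ε₁⟫| := by
      rw [hexp]
      have h := abs_add9 (⟪A x', y'⟫) (y i2 * ⟪A x', ε₂⟫) (y i1 * ⟪A x', ε₁⟫)
        (x i2 * ⟪A ε₂, y'⟫) (x i1 * ⟪A ε₁, y'⟫) (x i2 * y i2 * ⟪A ε₂, ε₂⟫)
        (x i2 * y i1 * ⟪A ε₁, ε₂⟫) (x i1 * y i2 * ⟪A ε₁, ε₂⟫) (x i1 * y i1 * ⟪A ε₁, ε₁⟫)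
      simp only [abs_mul] at h
      exact h
    have hq1 : |⟪A x', y'⟫| ≤ M * (‖x‖ * ‖y‖) := by
      have h := hb1' x' y' hx1 hy1
      calc |⟪A x', y'⟫| ≤ M * (‖x'‖ * ‖y'‖) := h
        _ ≤ M * (‖x‖ * ‖y‖) := by
          refine mul_le_mul_of_nonneg_left ?_ hM0
          exact mul_le_mul hnx' hny' (norm_nonneg y') (norm_nonneg x)
    have hq2 : |⟪A x', ε₂⟫| ≤ M * ‖x‖ := by
      have h := hb1' x' ε₂ hx1 ce21
      rw [nε2, mul_one] at h
      calc |⟪A x', ε₂⟫| ≤ M * ‖x'‖ := h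
        _ ≤ M * ‖x‖ := mul_le_mul_of_nonneg_left hnx' hM0
    have hq3 : d * |⟪A x', ε₁⟫| ≤ 3 * (M * ‖x‖) := by
      have h := hkey1 x' hx1 hx2
      have h2 : 3 * (M * ‖x'‖) ≤ 3 * (M * ‖x‖) := by
        linarith only [mul_le_mul_of_nonneg_left hnx' hM0]
      have h3 := mul_le_mul_of_nonneg_right hdg1 (abs_nonneg ⟪A x', ε₁⟫)
      linarith only [h, h2, h3]
    have hq4 : |⟪A ε₂, y'⟫| ≤ M * ‖y‖ := by
      rw [hsymm ε₂ y']
      have h := hb1' y' ε₂ hy1 ce21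
      rw [nε2, mul_one] at h
      calc |⟪A y', ε₂⟫| ≤ M * ‖y'‖ := h
        _ ≤ M * ‖y‖ := mul_le_mul_of_nonneg_left hny' hM0
    have hq5 : d * |⟪A ε₁, y'⟫| ≤ 3 * (M * ‖y‖) := by
      rw [hsymm ε₁ y']
      have h := hkey1 y' hy1 hy2
      have h2 : 3 * (M * ‖y'‖) ≤ 3 * (M * ‖y‖) := by
        linarith only [mul_le_mul_of_nonneg_left hny' hM0]
      have h3 := mul_le_mul_of_nonneg_right hdg1 (abs_nonneg ⟪A y', ε₁⟫)
      linarith only [h, h2, h3]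
    have hfin := scalar_final hd0 hd1 hM0 (norm_nonneg x) (norm_nonneg y)
      (abs_nonneg _) (abs_nonneg _) (abs_nonneg _) (abs_nonneg _) (abs_nonneg _)
      (abs_nonneg _) (abs_nonneg _) (abs_nonneg _)
      (abs_nonneg _) (abs_nonneg _) (abs_nonneg _) (abs_nonneg _)
      (hcoord x i1) (hcoord x i2) (hcoord y i1) (hcoord y i2)
      h9 hq1 hq2 hq3 hq4 hq5 hB22 hY hX
    rw [show (1000:ℝ) / s ^ 3 * M * (‖x‖ * ‖y‖) = 1000 * (M * (‖x‖ * ‖y‖)) / s ^ 3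
      from by ring, le_div_iff₀ (pow_pos hs0 3)]
    have hs3 : s ^ 3 = 27 * d ^ 3 := by rw [hddef]; ring
    rw [hs3]
    linarith only [hfin, mul_nonneg hM0 (mul_nonneg (norm_nonneg x) (norm_nonneg y))]
  -- conclude with the operator norm
  refine ContinuousLinearMap.opNorm_le_bound A ?_ fun x => ?_
  · have : (0:ℝ) ≤ 1000 / s ^ 3 := by positivity
    exact mul_nonneg this hM0
  · rcases eq_or_ne (A x) 0 with h0 | h0
    · rw [h0, norm_zero]
      have h1 : (0:ℝ) ≤ 1000 / s ^ 3 := by positivity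
      exact mul_nonneg (mul_nonneg h1 hM0) (norm_nonneg x)
    · have h := hmain x (A x)
      have hip : ⟪A x, A x⟫ = ‖A x‖ ^ 2 := real_inner_self_eq_norm_sq _
      rw [hip, abs_of_nonneg (sq_nonneg _)] at h
      have hAx : 0 < ‖A x‖ := norm_pos_iff.2 h0
      nlinarith only [h, hAx]

end Aux

set_option maxHeartbeats 1000000 in
/-- Under the quantitative non-flatness conditions on the three unit
normals `ν₁, ν₂, ν₃`, there is a constant `C > 0` depending only on `C₀` such that
every symmetric matrix `g` satisfies
`‖g‖ ≤ C · max_k sup{ |⟨g v, w⟩| : v, w ∈ Πₖ, ‖v‖ = ‖w‖ = 1 }`,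
where `Πₖ` is the orthogonal complement of `νₖ` and `‖g‖` is the operator norm on
Euclidean `ℝⁿ`. -/
theorem stmt9 (C₀ : ℝ) (hC₀ : 0 < C₀) (hC₀' : C₀ < 1) :
    ∃ C : ℝ, 0 < C ∧
      ∀ (n : ℕ) (hn : 3 ≤ n) (γ₁ γ₂ γ₃ : ℝ),
        0 < γ₁ → γ₁ ≤ 1 / 2 → 0 ≤ γ₂ → γ₂ ≤ 1 → 0 ≤ γ₃ → γ₃ ≤ 1 →
      ∀ ν₁ ν₂ ν₃ : EuclideanSpace ℝ (Fin n),
        ν₁ = -EuclideanSpace.single (⟨n - 1, by omega⟩ : Fin n) (1 : ℝ) →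
        ν₂ = (1 / Real.sqrt (1 + γ₁ ^ 2)) •
          (-EuclideanSpace.single (⟨n - 1, by omega⟩ : Fin n) (1 : ℝ) +
            γ₁ • EuclideanSpace.single (⟨n - 2, by omega⟩ : Fin n) (1 : ℝ)) →
        ν₃ = (1 / Real.sqrt (1 + γ₂ ^ 2 + γ₃ ^ 2)) •
          (-EuclideanSpace.single (⟨n - 1, by omega⟩ : Fin n) (1 : ℝ) +
            γ₂ • EuclideanSpace.single (⟨n - 2, by omega⟩ : Fin n) (1 : ℝ) +
            γ₃ • EuclideanSpace.single (⟨n - 3, by omega⟩ : Fin n) (1 : ℝ)) →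
        ⟪ν₁, ν₂⟫ ≤ 1 - C₀ → ⟪ν₁, ν₃⟫ ≤ 1 - C₀ → ⟪ν₂, ν₃⟫ ≤ 1 - C₀ →
      ∀ g : Matrix (Fin n) (Fin n) ℝ, g.IsSymm →
        ‖Matrix.toEuclideanCLM (𝕜 := ℝ) g‖ ≤ C *
          max (sSup {t : ℝ | ∃ v w : EuclideanSpace ℝ (Fin n),
                ⟪v, ν₁⟫ = 0 ∧ ⟪w, ν₁⟫ = 0 ∧ ‖v‖ = 1 ∧ ‖w‖ = 1 ∧
                t = |⟪Matrix.toEuclideanCLM (𝕜 := ℝ) g v, w⟫|})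
            (max (sSup {t : ℝ | ∃ v w : EuclideanSpace ℝ (Fin n),
                ⟪v, ν₂⟫ = 0 ∧ ⟪w, ν₂⟫ = 0 ∧ ‖v‖ = 1 ∧ ‖w‖ = 1 ∧
                t = |⟪Matrix.toEuclideanCLM (𝕜 := ℝ) g v, w⟫|})
              (sSup {t : ℝ | ∃ v w : EuclideanSpace ℝ (Fin n),
                ⟪v, ν₃⟫ = 0 ∧ ⟪w, ν₃⟫ = 0 ∧ ‖v‖ = 1 ∧ ‖w‖ = 1 ∧
                t = |⟪Matrix.toEuclideanCLM (𝕜 := ℝ) g v, w⟫|})) := by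
  refine ⟨1000 / (min (C₀ * (2 - C₀)) (1 / 4)) ^ 3, ?_, ?_⟩
  · have h1 : 0 < min (C₀ * (2 - C₀)) (1 / 4) :=
      lt_min (by nlinarith only [hC₀, hC₀']) (by norm_num)
    positivity
  intro n hn γ₁ γ₂ γ₃ hg1 hg1' hg2 hg2' hg3 hg3' ν₁ ν₂ ν₃ hν₁ hν₂ hν₃ hn12 hn13 hn23 g hgsym
  set A := Matrix.toEuclideanCLM (𝕜 := ℝ) g with hAdef
  have hH : g.IsHermitian := (Matrix.conjTranspose_eq_transpose_of_trivial g).trans hgsym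
  have hSym := Matrix.isHermitian_iff_isSymmetric.mp hH
  have hsymm : ∀ x y : EuclideanSpace ℝ (Fin n), ⟪A x, y⟫ = ⟪A y, x⟫ := by
    intro x y
    have h1 : ∀ z : EuclideanSpace ℝ (Fin n), A z = Matrix.toEuclideanLin g z := fun z => by
      rw [hAdef, ← Matrix.coe_toEuclideanCLM_eq_toEuclideanLin]; rfl
    rw [h1 x, h1 y, hSym x y]
    exact real_inner_comm _ _
  have e12 : (⟨n - 2, by omega⟩ : Fin n) ≠ (⟨n - 1, by omega⟩ : Fin n) := by
    simp only [ne_eq, Fin.mk.injEq]; omega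
  have e13 : (⟨n - 3, by omega⟩ : Fin n) ≠ (⟨n - 1, by omega⟩ : Fin n) := by
    simp only [ne_eq, Fin.mk.injEq]; omega
  have e23 : (⟨n - 3, by omega⟩ : Fin n) ≠ (⟨n - 2, by omega⟩ : Fin n) := by
    simp only [ne_eq, Fin.mk.injEq]; omega
  have hM1 : 0 ≤ sSup {t : ℝ | ∃ v w : EuclideanSpace ℝ (Fin n),
      ⟪v, ν₁⟫ = 0 ∧ ⟪w, ν₁⟫ = 0 ∧ ‖v‖ = 1 ∧ ‖w‖ = 1 ∧ t = |⟪A v, w⟫|} := by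
    refine aux_sSup_nonneg A ν₁
      (v := EuclideanSpace.single (⟨n - 2, by omega⟩ : Fin n) (1 : ℝ)) ?_ (by simp)
    rw [hν₁]
    simp [EuclideanSpace.inner_single_left, EuclideanSpace.single_apply, e12, e12.symm,
      Fin.mk.injEq, show ¬(n - 1 = n - 2) by omega, show ¬(n - 2 = n - 1) by omega]
  have hM0 : 0 ≤ max (sSup {t : ℝ | ∃ v w : EuclideanSpace ℝ (Fin n),
        ⟪v, ν₁⟫ = 0 ∧ ⟪w, ν₁⟫ = 0 ∧ ‖v‖ = 1 ∧ ‖w‖ = 1 ∧ t = |⟪A v, w⟫|})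
      (max (sSup {t : ℝ | ∃ v w : EuclideanSpace ℝ (Fin n),
        ⟪v, ν₂⟫ = 0 ∧ ⟪w, ν₂⟫ = 0 ∧ ‖v‖ = 1 ∧ ‖w‖ = 1 ∧ t = |⟪A v, w⟫|})
      (sSup {t : ℝ | ∃ v w : EuclideanSpace ℝ (Fin n),
        ⟪v, ν₃⟫ = 0 ∧ ⟪w, ν₃⟫ = 0 ∧ ‖v‖ = 1 ∧ ‖w‖ = 1 ∧ t = |⟪A v, w⟫|})) :=
    le_trans hM1 (le_max_left _ _)
  refine stmt9_main hC₀ hC₀' hg1 hg1' hg2 hg2' hg3 hg3' e12 e13 e23 hν₁ hν₂ hν₃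
    hn12 hn13 hn23 hsymm hM0 ?_ ?_ ?_
  · exact fun v w hv hw => aux_abs_le (le_max_left _ _) hv hw
  · exact fun v w hv hw =>
      aux_abs_le (le_trans (le_max_left _ _) (le_max_right _ _)) hv hw
  · exact fun v w hv hw =>
      aux_abs_le (le_trans (le_max_right _ _) (le_max_right _ _)) hv hw
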